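/- The table entry δ fits in 16 bits for M ≤ 12 (Lemma 2 of the paper): if M ≤ 12, 1 ≤ P_x < 2^{M-1}, and k is the unique natural with 2^M ≤ P_x·2^k < 2^{M+1}, then δ = k·2^M - P_x·2^k satisfies 0 < δ < 2^16. -/
import Mathlib


/-- The table entry δ fits in 16 bits for `M ≤ 12` (Lemma 2 of the paper). -/
theorem ansai_delta_fits_uint16
    (M Px k : ℕ) (hM : 2 ≤ M ∧ M ≤ 12)
    (hP : 1 ≤ Px ∧ Px < 2 ^ (M - 1))
    (hk : 2 ^ M ≤ Px * 2 ^ k ∧ Px * 2 ^ k < 2 ^ (M + 1))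
    (δ : ℤ) (hδ : δ = (k : ℤ) * 2 ^ M - (Px : ℤ) * 2 ^ k) :
    0 < δ ∧ δ < 2 ^ 16 := by
  obtain ⟨hM2, hM12⟩ := hM
  obtain ⟨hP1, hP2⟩ := hP
  obtain ⟨hk1, hk2⟩ := hk
  -- k ≥ 2
  have hk2ge : 2 ≤ k := by
    by_contra h
    push_neg at h
    interval_cases k
    · have : Px < 2 ^ M := lt_of_lt_of_le hP2 (Nat.pow_le_pow_right (by norm_num) (Nat.sub_le _ _))
      omega
    · have : Px * 2 < 2 ^ (M - 1) * 2 := by omega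
      have h2 : 2 ^ (M - 1) * 2 = 2 ^ M := by
        rw [← pow_succ]
        congr 1
        omega
      simp at hk1
      omega
  -- k ≤ M
  have hkM : k ≤ M := by
    have h1 : 2 ^ k ≤ Px * 2 ^ k := Nat.le_mul_of_pos_left _ hP1
    have h2 : 2 ^ k < 2 ^ (M + 1) := lt_of_le_of_lt h1 hk2
    have := (Nat.pow_lt_pow_iff_right (a := 2) (by norm_num)).mp h2
    omega
  constructor
  · have h1 : (Px : ℤ) * 2 ^ k < 2 * 2 ^ M := by
      have : (Px * 2 ^ k : ℕ) < 2 ^ (M + 1) := hk2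
      have := Nat.cast_lt (α := ℤ).mpr this
      push_cast at this
      calc (Px : ℤ) * 2 ^ k < 2 ^ (M + 1) := this
        _ = 2 * 2 ^ M := by ring
    have h2 : (2 : ℤ) * 2 ^ M ≤ (k : ℤ) * 2 ^ M := by
      apply mul_le_mul_of_nonneg_right _ (by positivity)
      exact_mod_cast hk2ge
    omega
  · have h1 : (2 : ℤ) ^ M ≤ (Px : ℤ) * 2 ^ k := by exact_mod_cast hk1
    have h3 : δ ≤ ((k : ℤ) - 1) * 2 ^ M := by rw [hδ]; nlinarith
    have h4 : ((k : ℤ) - 1) * 2 ^ M ≤ 11 * 2 ^ 12 := by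
      have hkZ : (k : ℤ) - 1 ≤ 11 := by
        have : k ≤ 12 := le_trans hkM hM12
        omega
      have hMZ : (2 : ℤ) ^ M ≤ 2 ^ 12 := pow_le_pow_right₀ (by norm_num) hM12
      have : (0 : ℤ) ≤ (k : ℤ) - 1 := by
        have : (2 : ℤ) ≤ k := by exact_mod_cast hk2ge
        omega
      calc ((k : ℤ) - 1) * 2 ^ M ≤ 11 * 2 ^ M := by
            apply mul_le_mul_of_nonneg_right hkZ (by positivity)
        _ ≤ 11 * 2 ^ 12 := by nlinarith
    omega
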